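/- Let U ⊆ ℂⁿ be open, r : U → ℝ of class C², K ⊂ U compact, and C₁ > 0 a constant such that L_r(z;X) ≥ C₁‖X‖² for all z in some open neighborhood of K contained in U and all X ∈ ℂⁿ. Then there exist a constant C₂ with 0 < C₂ < C₁ and ε₂ > 0 such that for every ζ ∈ K and every z ∈ U with ‖z−ζ‖ < ε₂ one has r(z) ≥ r(ζ) − 2 Re P(z;ζ) + C₂‖z−ζ‖², where P(·;ζ) is the Levi polynomial of r at ζ. -/

import Mathlib

open Complex Metric Set

noncomputable section

/-- The `j`-th standard basis vector of `ℂⁿ`. -/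
def stdBasis (n : ℕ) (j : Fin n) : EuclideanSpace ℂ (Fin n) :=
  EuclideanSpace.single j 1

/-- Wirtinger derivative `∂r/∂z_j = (1/2)(∂r/∂x_j − i ∂r/∂y_j)` of `r : ℂⁿ → ℝ` at `z`. -/
def wirtingerZ {n : ℕ} (r : EuclideanSpace ℂ (Fin n) → ℝ)
    (z : EuclideanSpace ℂ (Fin n)) (j : Fin n) : ℂ :=
  (1 / 2 : ℂ) * (((fderiv ℝ r z (stdBasis n j) : ℝ) : ℂ)
    - Complex.I * ((fderiv ℝ r z (Complex.I • stdBasis n j) : ℝ) : ℂ))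

/-- Wirtinger derivative `∂r/∂z̄_j = (1/2)(∂r/∂x_j + i ∂r/∂y_j)` of `r : ℂⁿ → ℝ` at `z`. -/
def wirtingerZbar {n : ℕ} (r : EuclideanSpace ℂ (Fin n) → ℝ)
    (z : EuclideanSpace ℂ (Fin n)) (j : Fin n) : ℂ :=
  (1 / 2 : ℂ) * (((fderiv ℝ r z (stdBasis n j) : ℝ) : ℂ)
    + Complex.I * ((fderiv ℝ r z (Complex.I • stdBasis n j) : ℝ) : ℂ))

/-- Second Wirtinger derivative `∂²r/∂z_i∂z_j` of `r : ℂⁿ → ℝ` at `z`. -/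
def wirtingerZZ {n : ℕ} (r : EuclideanSpace ℂ (Fin n) → ℝ)
    (z : EuclideanSpace ℂ (Fin n)) (i j : Fin n) : ℂ :=
  (1 / 4 : ℂ) *
    (((fderiv ℝ (fderiv ℝ r) z (stdBasis n i) (stdBasis n j) : ℝ) : ℂ)
      - ((fderiv ℝ (fderiv ℝ r) z (Complex.I • stdBasis n i) (Complex.I • stdBasis n j) : ℝ) : ℂ)
      - Complex.I * (((fderiv ℝ (fderiv ℝ r) z (stdBasis n i) (Complex.I • stdBasis n j) : ℝ) : ℂ)
        + ((fderiv ℝ (fderiv ℝ r) z (Complex.I • stdBasis n i) (stdBasis n j) : ℝ) : ℂ)))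

/-- Second Wirtinger derivative `∂²r/∂z_i∂z̄_j` of `r : ℂⁿ → ℝ` at `z`. -/
def wirtingerZZbar {n : ℕ} (r : EuclideanSpace ℂ (Fin n) → ℝ)
    (z : EuclideanSpace ℂ (Fin n)) (i j : Fin n) : ℂ :=
  (1 / 4 : ℂ) *
    (((fderiv ℝ (fderiv ℝ r) z (stdBasis n i) (stdBasis n j) : ℝ) : ℂ)
      + ((fderiv ℝ (fderiv ℝ r) z (Complex.I • stdBasis n i) (Complex.I • stdBasis n j) : ℝ) : ℂ)
      + Complex.I * (((fderiv ℝ (fderiv ℝ r) z (stdBasis n i) (Complex.I • stdBasis n j) : ℝ) : ℂ)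
        - ((fderiv ℝ (fderiv ℝ r) z (Complex.I • stdBasis n i) (stdBasis n j) : ℝ) : ℂ)))

/-- The Levi form `L_r(z;X) = Σ_{i,j} (∂²r/∂z_i∂z̄_j)(z) X_i conj(X_j)`
(a real number, for real-valued `C²` functions `r`). -/
def leviForm {n : ℕ} (r : EuclideanSpace ℂ (Fin n) → ℝ)
    (z X : EuclideanSpace ℂ (Fin n)) : ℝ :=
  (∑ i : Fin n, ∑ j : Fin n,
    wirtingerZZbar r z i j * X i * (starRingEnd ℂ) (X j)).re

/-- The Levi polynomial
`P(z;ζ) = −Σ_j (∂r/∂z_j)(ζ)(z_j−ζ_j) − (1/2) Σ_{i,j} (∂²r/∂z_i∂z_j)(ζ)(z_i−ζ_i)(z_j−ζ_j)`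
of `r` at `ζ`, evaluated at `z` (first argument `ζ`, second `z`). -/
def leviPolynomial {n : ℕ} (r : EuclideanSpace ℂ (Fin n) → ℝ)
    (ζ z : EuclideanSpace ℂ (Fin n)) : ℂ :=
  - (∑ j : Fin n, wirtingerZ r ζ j * (z j - ζ j))
    - (1 / 2 : ℂ) * ∑ i : Fin n, ∑ j : Fin n,
        wirtingerZZ r ζ i j * (z i - ζ i) * (z j - ζ j)

/-- The complex gradient `∇r(z) = (∂r/∂z̄_1(z), …, ∂r/∂z̄_n(z))`. -/
def wirtingerGrad {n : ℕ} (r : EuclideanSpace ℂ (Fin n) → ℝ)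
    (z : EuclideanSpace ℂ (Fin n)) : EuclideanSpace ℂ (Fin n) :=
  (WithLp.equiv 2 (Fin n → ℂ)).symm fun j => wirtingerZbar r z j

/-- `‖f‖_{C²(U)} < ε`: the function and its first- and second-order derivatives
are bounded by `ε` on `U`. -/
def C2NormLtOn {n : ℕ} (f : EuclideanSpace ℂ (Fin n) → ℝ)
    (U : Set (EuclideanSpace ℂ (Fin n))) (ε : ℝ) : Prop :=
  ∀ z ∈ U, |f z| < ε ∧ ‖fderiv ℝ f z‖ < ε ∧ ‖fderiv ℝ (fderiv ℝ f) z‖ < ε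


lemma decomp {n : ℕ} (h : EuclideanSpace ℂ (Fin n)) :
    h = ∑ j, ((h j).re • stdBasis n j + (h j).im • (Complex.I • stdBasis n j)) := by
  ext k
  have := map_sum (EuclideanSpace.proj (𝕜 := ℂ) k)
    (fun j => ((h j).re • stdBasis n j + (h j).im • (Complex.I • stdBasis n j))) Finset.univ
  rw [show (∑ j, ((h j).re • stdBasis n j + (h j).im • (Complex.I • stdBasis n j))) k =
    EuclideanSpace.proj (𝕜 := ℂ) k (∑ j, ((h j).re • stdBasis n j
      + (h j).im • (Complex.I • stdBasis n j))) from rfl, this]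
  simp [stdBasis, EuclideanSpace.single_apply, Finset.sum_add_distrib, Finset.sum_ite_eq,
    Complex.re_add_im]

lemma term_id (A B C D : ℝ) (u v : ℂ) :
    2 * ((((1/4 : ℂ) * ((A : ℂ) - (D : ℂ) - Complex.I * ((B : ℂ) + (C : ℂ)))) * u * v).re
      + (((1/4 : ℂ) * ((A : ℂ) + (D : ℂ) + Complex.I * ((B : ℂ) - (C : ℂ)))) * u
        * (starRingEnd ℂ) v).re)
    = u.re * v.re * A + u.re * v.im * B + u.im * v.re * C + u.im * v.im * D := by
  simp [Complex.mul_re, Complex.mul_im]; ring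

lemma firstterm_id (A B : ℝ) (u : ℂ) :
    2 * (((1/2 : ℂ) * ((A : ℂ) - Complex.I * (B : ℂ))) * u).re = u.re * A + u.im * B := by
  simp [Complex.mul_re, Complex.mul_im]; ring

lemma first_order {n : ℕ} (r : EuclideanSpace ℂ (Fin n) → ℝ) (ζ h : EuclideanSpace ℂ (Fin n)) :
    2 * (∑ j, wirtingerZ r ζ j * h j).re = fderiv ℝ r ζ h := by
  conv_rhs => rw [decomp h]
  rw [map_sum, Complex.re_sum, Finset.mul_sum]
  refine Finset.sum_congr rfl fun j _ => ?_
  rw [map_add, map_smul, map_smul, smul_eq_mul, smul_eq_mul]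
  exact firstterm_id _ _ _

lemma second_order {n : ℕ} (r : EuclideanSpace ℂ (Fin n) → ℝ) (ζ h : EuclideanSpace ℂ (Fin n)) :
    2 * ((∑ i, ∑ j, wirtingerZZ r ζ i j * h i * h j).re + leviForm r ζ h)
      = fderiv ℝ (fderiv ℝ r) ζ h h := by
  set Q := fderiv ℝ (fderiv ℝ r) ζ with hQdef
  have key1 : ∀ u : EuclideanSpace ℂ (Fin n), Q u h = ∑ j,
      ((h j).re * Q u (stdBasis n j) + (h j).im * Q u (Complex.I • stdBasis n j)) := by
    intro u
    conv_lhs => rw [decomp h]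
    rw [map_sum]
    exact Finset.sum_congr rfl fun j _ => by
      rw [map_add, map_smul, map_smul, smul_eq_mul, smul_eq_mul]
  have key2 : ∀ v : EuclideanSpace ℂ (Fin n), Q h v = ∑ i,
      ((h i).re * Q (stdBasis n i) v + (h i).im * Q (Complex.I • stdBasis n i) v) := by
    intro v
    conv_lhs => rw [decomp h]
    rw [map_sum, ContinuousLinearMap.sum_apply]
    exact Finset.sum_congr rfl fun i _ => by
      rw [map_add, map_smul, map_smul, ContinuousLinearMap.add_apply,
        ContinuousLinearMap.smul_apply, ContinuousLinearMap.smul_apply, smul_eq_mul, smul_eq_mul]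
  have hR : Q h h = ∑ i, ∑ j,
      ((h i).re * (h j).re * Q (stdBasis n i) (stdBasis n j)
      + (h i).re * (h j).im * Q (stdBasis n i) (Complex.I • stdBasis n j)
      + (h i).im * (h j).re * Q (Complex.I • stdBasis n i) (stdBasis n j)
      + (h i).im * (h j).im * Q (Complex.I • stdBasis n i) (Complex.I • stdBasis n j)) := by
    rw [key1 h, Finset.sum_comm]
    refine Finset.sum_congr rfl fun j _ => ?_
    rw [key2, key2, Finset.mul_sum, Finset.mul_sum, ← Finset.sum_add_distrib]
    exact Finset.sum_congr rfl fun i _ => by ring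
  rw [hR, leviForm, Complex.re_sum, Complex.re_sum, ← Finset.sum_add_distrib, Finset.mul_sum]
  refine Finset.sum_congr rfl fun i _ => ?_
  rw [Complex.re_sum, Complex.re_sum, ← Finset.sum_add_distrib, Finset.mul_sum]
  refine Finset.sum_congr rfl fun j _ => ?_
  exact term_id _ _ _ _ _ _

set_option maxHeartbeats 1000000 in
/-- Let `U ⊆ ℂⁿ` be open, `r : U → ℝ` of class `C²`, `K ⊂ U` compact, and
`C₁ > 0` such that `L_r(z;X) ≥ C₁‖X‖²` for all `z` in some open neighborhood of `K`
contained in `U` and all `X ∈ ℂⁿ`. Then there exist `0 < C₂ < C₁` and `ε₂ > 0` such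
that for every `ζ ∈ K` and every `z ∈ U` with `‖z−ζ‖ < ε₂` one has
`r(z) ≥ r(ζ) − 2 Re P(z;ζ) + C₂‖z−ζ‖²`. -/
theorem statement6 {n : ℕ} (U : Set (EuclideanSpace ℂ (Fin n))) (hU : IsOpen U)
    (r : EuclideanSpace ℂ (Fin n) → ℝ) (hr : ContDiffOn ℝ 2 r U)
    (K : Set (EuclideanSpace ℂ (Fin n))) (hK : IsCompact K) (hKU : K ⊆ U)
    (C₁ : ℝ) (hC₁ : 0 < C₁)
    (hlevi : ∃ V : Set (EuclideanSpace ℂ (Fin n)), IsOpen V ∧ K ⊆ V ∧ V ⊆ U ∧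
      ∀ z ∈ V, ∀ X : EuclideanSpace ℂ (Fin n), C₁ * ‖X‖ ^ 2 ≤ leviForm r z X) :
    ∃ C₂ ε₂ : ℝ, 0 < C₂ ∧ C₂ < C₁ ∧ 0 < ε₂ ∧
      ∀ ζ ∈ K, ∀ z ∈ U, ‖z - ζ‖ < ε₂ →
        r ζ - 2 * (leviPolynomial r ζ z).re + C₂ * ‖z - ζ‖ ^ 2 ≤ r z := by
  obtain ⟨V, hVopen, hKV, hVU, hLevi⟩ := hlevi
  obtain ⟨δ, hδpos, hδ⟩ := hK.exists_cthickening_subset_open hU hKU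
  set K' := cthickening δ K with hK'def
  have hK'cpt : IsCompact K' := hK.cthickening
  have h1 : ContDiffOn ℝ 1 (fderiv ℝ r) U := hr.fderiv_of_isOpen hU (by norm_num)
  have hF2cont : ContinuousOn (fderiv ℝ (fderiv ℝ r)) U :=
    h1.continuousOn_fderiv_of_isOpen hU (by norm_num)
  have hUC := hK'cpt.uniformContinuousOn_of_continuous (hF2cont.mono hδ)
  replace hUC : ∀ ε > 0, ∃ δ > 0, ∀ x ∈ K', ∀ y ∈ K', dist x y < δ →
      dist (fderiv ℝ (fderiv ℝ r) x) (fderiv ℝ (fderiv ℝ r) y) < ε :=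
    Metric.uniformContinuousOn_iff.mp (by exact hUC)
  obtain ⟨ε₁, hε₁pos, hε₁⟩ := hUC C₁ hC₁
  refine ⟨C₁/2, min (δ/2) (ε₁/2), by positivity, by linarith, by positivity, ?_⟩
  intro ζ hζ z hzU hdist
  by_cases hz0 : z = ζ
  · subst hz0
    simp [leviPolynomial]
  set h : EuclideanSpace ℂ (Fin n) := z - ζ with hh
  have hne : ‖h‖ ≠ 0 := by
    simpa [hh] using sub_ne_zero_of_ne hz0
  have hnorm_pos : 0 < ‖h‖ := lt_of_le_of_ne (norm_nonneg _) (Ne.symm hne)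
  have hδ2 : ‖h‖ < δ := lt_of_lt_of_le hdist (le_trans (min_le_left _ _) (by linarith))
  have hε2 : ‖h‖ < ε₁ := lt_of_lt_of_le hdist (le_trans (min_le_right _ _) (by linarith))
  set G : ℝ → EuclideanSpace ℂ (Fin n) := fun t => ζ + t • h with hGdef
  have hGmem : ∀ t ∈ Icc (0:ℝ) 1, G t ∈ K' := by
    intro t ht
    refine mem_cthickening_of_dist_le (G t) ζ δ K hζ ?_
    have : dist (G t) ζ = |t| * ‖h‖ := by
      rw [dist_eq_norm]; simp [hGdef, norm_smul]
    rw [this, _root_.abs_of_nonneg ht.1]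
    nlinarith [ht.2, hnorm_pos]
  have hGU : ∀ t ∈ Icc (0:ℝ) 1, G t ∈ U := fun t ht => hδ (hGmem t ht)
  have hζK' : ζ ∈ K' := self_subset_cthickening K hζ
  have hGderiv : ∀ t : ℝ, HasDerivAt G h t := fun t => by
    simpa [hGdef] using ((hasDerivAt_id t).smul_const h).const_add ζ
  set g : ℝ → ℝ := fun t => r (G t) with hgdef
  set g1 : ℝ → ℝ := fun t => fderiv ℝ r (G t) h with hg1def
  set g2 : ℝ → ℝ := fun t => fderiv ℝ (fderiv ℝ r) (G t) h h with hg2def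
  have hg : ∀ t ∈ Icc (0:ℝ) 1, HasDerivAt g (g1 t) t := by
    intro t ht
    exact ((hr.contDiffAt (hU.mem_nhds (hGU t ht))).differentiableAt
      (by norm_num)).hasFDerivAt.comp_hasDerivAt t (hGderiv t)
  have hg1 : ∀ t ∈ Icc (0:ℝ) 1, HasDerivAt g1 (g2 t) t := by
    intro t ht
    have hF : HasDerivAt (fun s : ℝ => fderiv ℝ r (G s))
        (fderiv ℝ (fderiv ℝ r) (G t) h) t :=
      ((h1.contDiffAt (hU.mem_nhds (hGU t ht))).differentiableAt
        (by norm_num)).hasFDerivAt.comp_hasDerivAt t (hGderiv t)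
    simpa [hg1def, hg2def] using hF.clm_apply (hasDerivAt_const t h)
  set c : ℝ := 2 * (∑ i, ∑ j, wirtingerZZ r ζ i j * h i * h j).re + C₁ * ‖h‖ ^ 2 with hcdef
  have hbound : ∀ t ∈ Icc (0:ℝ) 1, c ≤ g2 t := by
    intro t ht
    have hdistt : dist (G t) ζ < ε₁ := by
      have : dist (G t) ζ = |t| * ‖h‖ := by
        rw [dist_eq_norm]; simp [hGdef, norm_smul]
      rw [this, _root_.abs_of_nonneg ht.1]
      nlinarith [ht.2, hnorm_pos, hε2]
    have hnd : ‖fderiv ℝ (fderiv ℝ r) (G t) - fderiv ℝ (fderiv ℝ r) ζ‖ < C₁ := by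
      have := hε₁ (G t) (hGmem t ht) ζ hζK' hdistt
      have e : ‖fderiv ℝ (fderiv ℝ r) (G t) - fderiv ℝ (fderiv ℝ r) ζ‖
          = dist (fderiv ℝ (fderiv ℝ r) (G t)) (fderiv ℝ (fderiv ℝ r) ζ) :=
        (dist_eq_norm (fderiv ℝ (fderiv ℝ r) (G t)) (fderiv ℝ (fderiv ℝ r) ζ)).symm
      rw [e]; exact this
    have habs : |(fderiv ℝ (fderiv ℝ r) (G t) - fderiv ℝ (fderiv ℝ r) ζ) h h|
        ≤ ‖fderiv ℝ (fderiv ℝ r) (G t) - fderiv ℝ (fderiv ℝ r) ζ‖ * ‖h‖ * ‖h‖ := by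
      calc |(fderiv ℝ (fderiv ℝ r) (G t) - fderiv ℝ (fderiv ℝ r) ζ) h h|
          ≤ ‖(fderiv ℝ (fderiv ℝ r) (G t) - fderiv ℝ (fderiv ℝ r) ζ) h‖ * ‖h‖ :=
            ((fderiv ℝ (fderiv ℝ r) (G t) - fderiv ℝ (fderiv ℝ r) ζ) h).le_opNorm h
        _ ≤ (‖fderiv ℝ (fderiv ℝ r) (G t) - fderiv ℝ (fderiv ℝ r) ζ‖ * ‖h‖) * ‖h‖ := by
            gcongr
            exact (fderiv ℝ (fderiv ℝ r) (G t) - fderiv ℝ (fderiv ℝ r) ζ).le_opNorm h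
        _ = _ := by ring
    have hsub : (fderiv ℝ (fderiv ℝ r) (G t) - fderiv ℝ (fderiv ℝ r) ζ) h h
        = g2 t - fderiv ℝ (fderiv ℝ r) ζ h h := by
      simp [hg2def, ContinuousLinearMap.sub_apply]
    have hlev := hLevi ζ (hKV hζ) h
    have hso := second_order r ζ h
    have h2 : fderiv ℝ (fderiv ℝ r) ζ h h
        ≥ 2 * (∑ i, ∑ j, wirtingerZZ r ζ i j * h i * h j).re + 2 * (C₁ * ‖h‖ ^ 2) := by
      rw [← hso]; linarith
    rw [hsub] at habs
    have := abs_le.mp habs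
    nlinarith [hnorm_pos, this.1, this.2, hnd, sq_nonneg ‖h‖, mul_pos hnorm_pos hnorm_pos]
  -- auxiliary function ψ
  set ψ : ℝ → ℝ := fun t => g t - c * t ^ 2 / 2 with hψdef
  set ψ1 : ℝ → ℝ := fun t => g1 t - c * t with hψ1def
  have hψ : ∀ t ∈ Icc (0:ℝ) 1, HasDerivAt ψ (ψ1 t) t := by
    intro t ht
    have hq : HasDerivAt (fun t : ℝ => c * t ^ 2 / 2) (c * t) t := by
      have := ((hasDerivAt_pow 2 t).const_mul c).div_const 2
      exact this.congr_deriv (by norm_num; ring)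
    exact (hg t ht).sub hq
  have hψ1 : ∀ t ∈ Icc (0:ℝ) 1, HasDerivAt ψ1 (g2 t - c) t := by
    intro t ht
    have hq : HasDerivAt (fun t : ℝ => c * t) c t := by
      simpa using (hasDerivAt_id t).const_mul c
    exact (hg1 t ht).sub hq
  have hmono : MonotoneOn ψ1 (Icc (0:ℝ) 1) := by
    refine monotoneOn_of_deriv_nonneg (convex_Icc 0 1)
      (fun t ht => (hψ1 t ht).continuousAt.continuousWithinAt) ?_ ?_
    · rw [interior_Icc]
      exact fun t ht => (hψ1 t (Ioo_subset_Icc_self ht)).differentiableAt.differentiableWithinAt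
    · rw [interior_Icc]
      intro t ht
      rw [(hψ1 t (Ioo_subset_Icc_self ht)).deriv]
      have := hbound t (Ioo_subset_Icc_self ht)
      linarith
  obtain ⟨τ, hτ, hslope⟩ := exists_hasDerivAt_eq_slope ψ ψ1 (zero_lt_one)
    (fun t ht => ((hψ t ht).continuousAt.continuousWithinAt))
    (fun t ht => hψ t (Ioo_subset_Icc_self ht))
  have hψ1τ : ψ1 0 ≤ ψ1 τ :=
    hmono (left_mem_Icc.mpr zero_le_one) (Ioo_subset_Icc_self hτ) (le_of_lt hτ.1)
  have hval : ψ1 τ = ψ 1 - ψ 0 := by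
    rw [hslope]; ring_nf
  have hG0 : G 0 = ζ := by simp [hGdef]
  have hG1 : G 1 = z := by simp [hGdef, hh]
  have hψ0 : ψ 0 = r ζ := by simp [hψdef, hgdef, hG0]
  have hψone : ψ 1 = r z - c / 2 := by simp [hψdef, hgdef, hG1]
  have hψ10 : ψ1 0 = 2 * (∑ j, wirtingerZ r ζ j * h j).re := by
    rw [hψ1def]
    simp only [hg1def, hG0, mul_zero, sub_zero]
    rw [first_order r ζ h]
  -- combine
  have hfinal : r ζ + 2 * (∑ j, wirtingerZ r ζ j * h j).re + c / 2 ≤ r z := by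
    have := hψ1τ
    rw [hψ10, hval, hψ0, hψone] at this
    linarith
  have hP : - 2 * (leviPolynomial r ζ z).re
      = 2 * (∑ j, wirtingerZ r ζ j * h j).re
        + (∑ i, ∑ j, wirtingerZZ r ζ i j * h i * h j).re := by
    have hco : ∀ j, z j - ζ j = h j := fun j => rfl
    simp only [leviPolynomial, hco, Complex.sub_re, Complex.neg_re, Complex.mul_re,
      Complex.re_sum]
    simp [Complex.div_re]
    ring
  rw [hcdef] at hfinal
  nlinarith [hfinal, hP]

end
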